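/- Fix an integer n ≥ 1, masses m_1, …, m_n > 0 and radii s_1, …, s_n > 0. Let z : ℝ → ℝ be a twice differentiable solution of z''(t) = −∑_{i=1}^n m_i z(t)/(s_i² + z(t)²)^{3/2} whose energy E = z'(0)²/2 − ∑_{i=1}^n m_i (s_i² + z(0)²)^{-1/2} is strictly positive. Then the motion is hyperbolic: there exists σ ∈ {−1, +1} such that σ·z(t) → +∞ as t → +∞ and z'(t) → σ·√(2E) as t → +∞. -/

import Mathlib

open Filter Real

theorem sitnikov_positive_energy_hyperbolic
    (n : ℕ) (hn : 1 ≤ n) (m s : Fin n → ℝ)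
    (hm : ∀ i, 0 < m i) (hs : ∀ i, 0 < s i)
    (z : ℝ → ℝ) (hz : Differentiable ℝ z) (hz' : Differentiable ℝ (deriv z))
    (hode : ∀ t : ℝ, deriv (deriv z) t =
      -∑ i, m i * z t / (s i ^ 2 + z t ^ 2) ^ ((3 : ℝ) / 2))
    (E : ℝ)
    (hE : E = (deriv z 0) ^ 2 / 2
      - ∑ i, m i * (s i ^ 2 + z 0 ^ 2) ^ (-(1 / 2) : ℝ))
    (hEpos : 0 < E) :
    ∃ σ : ℝ, (σ = -1 ∨ σ = 1) ∧
      Filter.Tendsto (fun t => σ * z t) Filter.atTop Filter.atTop ∧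
      Filter.Tendsto (deriv z) Filter.atTop (nhds (σ * Real.sqrt (2 * E))) := by
  have hP : ∀ (i : Fin n) (t : ℝ), (0:ℝ) < s i ^ 2 + z t ^ 2 := by
    intro i t
    have := hs i
    positivity
  set U : ℝ → ℝ := fun t => ∑ i, m i * (s i ^ 2 + z t ^ 2) ^ (-(1 / 2) : ℝ) with hUdef
  set F : ℝ → ℝ := fun t => deriv z t ^ 2 / 2 - U t with hFdef
  -- energy is conserved
  have hFderiv : ∀ t, HasDerivAt F 0 t := by
    intro t
    have h1 : HasDerivAt (fun t => deriv z t ^ 2 / 2)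
        (deriv z t * deriv (deriv z) t) t := by
      have := (((hz' t).hasDerivAt).pow 2).div_const 2
      refine this.congr_deriv ?_
      push_cast
      ring
    have h2 : HasDerivAt U
        (∑ i, -(m i * z t * deriv z t * ((s i ^ 2 + z t ^ 2) ^ ((3:ℝ)/2))⁻¹)) t := by
      apply HasDerivAt.fun_sum
      intro i _
      have hb : HasDerivAt (fun t => s i ^ 2 + z t ^ 2) (2 * z t * deriv z t) t := by
        have := (hasDerivAt_const t (s i ^ 2)).add (((hz t).hasDerivAt).pow 2)
        refine this.congr_deriv ?_
        push_cast
        ring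
      have := (hb.rpow_const (p := (-(1/2) : ℝ)) (Or.inl (hP i t).ne')).const_mul (m i)
      refine this.congr_deriv ?_
      rw [show ((-(1/2) : ℝ)) - 1 = -((3:ℝ)/2) by norm_num, Real.rpow_neg (hP i t).le]
      ring
    have h := h1.sub h2
    have hval : deriv z t * deriv (deriv z) t
        - ∑ i, -(m i * z t * deriv z t * ((s i ^ 2 + z t ^ 2) ^ ((3:ℝ)/2))⁻¹) = 0 := by
      rw [hode t]
      rw [Finset.sum_neg_distrib, sub_neg_eq_add, mul_neg, neg_add_eq_zero, Finset.mul_sum]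
      refine Finset.sum_congr rfl fun i _ => ?_
      rw [div_eq_mul_inv]
      ring
    rwa [hval] at h
  have hFconst : ∀ t, F t = E := by
    intro t
    have h := is_const_of_deriv_eq_zero (f := F)
      (fun t => (hFderiv t).differentiableAt) (fun t => (hFderiv t).deriv) t 0
    rw [hE]
    exact h
  have hsq : ∀ t, deriv z t ^ 2 = 2 * E + 2 * U t := by
    intro t
    have := hFconst t
    simp only [hFdef] at this
    linarith
  have hUnonneg : ∀ t, 0 ≤ U t := by
    intro t
    exact Finset.sum_nonneg fun i _ =>
      mul_nonneg (hm i).le (Real.rpow_nonneg (hP i t).le _)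
  have h2E : ∀ t, 2 * E ≤ deriv z t ^ 2 := fun t => by
    have := hsq t; have := hUnonneg t; linarith
  have hne : ∀ t, deriv z t ≠ 0 := by
    intro t h
    have := h2E t
    rw [h] at this
    norm_num at this
    linarith
  obtain ⟨σ, hσ, hσ0⟩ : ∃ σ : ℝ, (σ = -1 ∨ σ = 1) ∧ 0 < σ * deriv z 0 := by
    rcases lt_or_gt_of_ne (hne 0) with h | h
    · exact ⟨-1, Or.inl rfl, by nlinarith⟩
    · exact ⟨1, Or.inr rfl, by nlinarith⟩
  have hσsq : σ * σ = 1 := by rcases hσ with h | h <;> rw [h] <;> norm_num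
  have hσne : σ ≠ 0 := by rcases hσ with h | h <;> rw [h] <;> norm_num
  have hcont : Continuous fun t => σ * deriv z t := continuous_const.mul hz'.continuous
  have hpos : ∀ t, 0 < σ * deriv z t := by
    intro t
    by_contra hle
    push_neg at hle
    have hlt : σ * deriv z t < 0 :=
      lt_of_le_of_ne hle (mul_ne_zero hσne (hne t))
    have h0 : (0:ℝ) ∈ Set.Icc ((fun t => σ * deriv z t) t) ((fun t => σ * deriv z t) 0) :=
      ⟨hlt.le, hσ0.le⟩
    obtain ⟨x, hx⟩ := intermediate_value_univ t 0 hcont h0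
    rcases mul_eq_zero.mp hx with h' | h'
    · exact hσne h'
    · exact hne x h'
  have hE2 : (0:ℝ) < 2 * E := by linarith
  have hsqrtpos : 0 < Real.sqrt (2 * E) := Real.sqrt_pos.mpr hE2
  have hmulpow : ∀ t, (σ * deriv z t) ^ 2 = deriv z t ^ 2 := by
    intro t
    rw [mul_pow, sq σ, hσsq, one_mul]
  have hlow : ∀ t, Real.sqrt (2 * E) ≤ σ * deriv z t := by
    intro t
    have h := Real.sqrt_le_sqrt (h2E t)
    rwa [← hmulpow t, Real.sqrt_sq (hpos t).le] at h
  -- linear growth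
  set g : ℝ → ℝ := fun t => σ * z t - Real.sqrt (2 * E) * t with hgdef
  have hg : ∀ t, HasDerivAt g (σ * deriv z t - Real.sqrt (2 * E)) t := by
    intro t
    have h1 : HasDerivAt (fun t : ℝ => σ * z t) (σ * deriv z t) t :=
      ((hz t).hasDerivAt).const_mul σ
    have h2 : HasDerivAt (fun t : ℝ => Real.sqrt (2 * E) * t) (Real.sqrt (2 * E)) t := by
      simpa using (hasDerivAt_id t).const_mul (Real.sqrt (2 * E))
    exact h1.sub h2
  have hgmono : Monotone g := by
    apply monotone_of_deriv_nonneg (fun t => (hg t).differentiableAt)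
    intro t
    rw [(hg t).deriv]
    have := hlow t
    linarith
  have hzt : Tendsto (fun t => σ * z t) atTop atTop := by
    have hlin : Tendsto (fun t : ℝ => g 0 + Real.sqrt (2 * E) * t) atTop atTop :=
      tendsto_atTop_add_const_left _ _ (Tendsto.const_mul_atTop hsqrtpos tendsto_id)
    apply tendsto_atTop_mono' atTop _ hlin
    filter_upwards [eventually_ge_atTop (0:ℝ)] with t ht
    have h := hgmono ht
    simp only [hgdef] at h ⊢
    linarith
  refine ⟨σ, hσ, hzt, ?_⟩
  have hz2 : Tendsto (fun t => z t ^ 2) atTop atTop := by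
    have h := hzt.atTop_mul_atTop₀ hzt
    refine h.congr fun t => ?_
    rw [show (σ * z t) * (σ * z t) = (σ * σ) * z t ^ 2 by ring, hσsq, one_mul]
  have hUto : Tendsto U atTop (nhds 0) := by
    have hterm : ∀ i : Fin n,
        Tendsto (fun t => m i * (s i ^ 2 + z t ^ 2) ^ (-(1 / 2) : ℝ)) atTop (nhds 0) := by
      intro i
      have h1 : Tendsto (fun t => s i ^ 2 + z t ^ 2) atTop atTop :=
        tendsto_atTop_add_const_left _ _ hz2
      have h2 := (tendsto_rpow_neg_atTop (y := (1/2:ℝ)) (by norm_num)).comp h1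
      have h3 := h2.const_mul (m i)
      simpa using h3
    have h := tendsto_finset_sum Finset.univ (fun i _ => hterm i)
    rw [Finset.sum_const_zero] at h
    exact h
  have hsqlim : Tendsto (fun t => deriv z t ^ 2) atTop (nhds (2 * E)) := by
    have h' : Tendsto (fun t => 2 * E + 2 * U t) atTop (nhds (2 * E + 2 * 0)) :=
      tendsto_const_nhds.add (hUto.const_mul (2:ℝ))
    rw [show 2 * E + 2 * (0:ℝ) = 2 * E by ring] at h'
    exact h'.congr fun t => (hsq t).symm
  have hσz' : Tendsto (fun t => σ * deriv z t) atTop (nhds (Real.sqrt (2 * E))) := by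
    have hc := (Real.continuous_sqrt.tendsto (2 * E)).comp hsqlim
    refine hc.congr fun t => ?_
    show Real.sqrt (deriv z t ^ 2) = σ * deriv z t
    rw [← hmulpow t, Real.sqrt_sq (hpos t).le]
  have h := hσz'.const_mul σ
  refine h.congr fun t => ?_
  rw [← mul_assoc, hσsq, one_mul]
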